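/- Let K be a number field, S a finite set of places of K containing all archimedean places, 𝒪_S the ring of S-integers, and n ≥ 3. Let a ∈ 𝒪_S be nonzero and let x = (0, …, 0, 1) ∈ 𝒪_S^n. Then for every unimodular vector y = (a_1, …, a_n) ∈ 𝒪_S^n satisfying y ≡ x (mod a²𝒪_S) (i.e., a_i ∈ a²𝒪_S for 1 ≤ i ≤ n−1 and a_n − 1 ∈ a²𝒪_S), there exists a matrix g in the subgroup of SL_n(𝒪_S) generated by the elementary matrices e_ij(t) with i ≠ j and t ∈ a𝒪_S, such that g x = y (matrices acting on column vectors). -/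

import Mathlib

open IsDedekindDomain NumberField

/-- The elementary matrix `e_ij(t)`: the identity matrix with an extra entry `t` in position
`(i, j)` (where `i ≠ j`), as an element of `SL_n(R)`. -/
def elemMatrix {n : ℕ} {R : Type*} [CommRing R] (i j : Fin n) (hij : i ≠ j) (t : R) :
    Matrix.SpecialLinearGroup (Fin n) R :=
  ⟨Matrix.transvection i j t, Matrix.det_transvection_of_ne i j hij t⟩

/-- The standard basis vector `(0, …, 0, 1)`. -/
def lastStdVec (n : ℕ) (R : Type*) [CommRing R] : Fin n → R :=
  fun i => if (i : ℕ) = n - 1 then 1 else 0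


open IsDedekindDomain.HeightOneSpectrum
open scoped Multiplicative nonZeroDivisors WithZero


section Misc

lemma assoc_le_of_count_le {α : Type*} [CommMonoidWithZero α] [UniqueFactorizationMonoid α]
    [DecidableEq (Associates α)] [∀ p : Associates α, Decidable (Irreducible p)]
    {a b : Associates α} (ha : a ≠ 0) (hb : b ≠ 0)
    (h : ∀ p : Associates α, Irreducible p → p.count a.factors ≤ p.count b.factors) : a ≤ b := by
  classical
  obtain ⟨sa, h_sa⟩ := Associates.factors_eq_some_iff_ne_zero.mpr ha
  obtain ⟨sb, h_sb⟩ := Associates.factors_eq_some_iff_ne_zero.mpr hb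
  rw [← Associates.factors_le, h_sa, h_sb, WithTop.coe_le_coe, Multiset.le_iff_count]
  rintro ⟨p, hp⟩
  have := h p hp
  rwa [h_sa, h_sb, Associates.count_some hp, Associates.count_some hp] at this

variable {R : Type*} [CommRing R] [IsDomain R] [IsDedekindDomain R]

lemma dvd_of_intValuation_le {r s : R} (hr : r ≠ 0) (hs : s ≠ 0)
    (h : ∀ v : HeightOneSpectrum R, v.intValuation r ≤ v.intValuation s) : s ∣ r := by
  classical
  rw [← Ideal.span_singleton_le_span_singleton, ← Ideal.dvd_iff_le,
    ← Associates.mk_le_mk_iff_dvd, ]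
  have hsb : Ideal.span {s} ≠ (0 : Ideal R) := by
    simpa [Ideal.zero_eq_bot, Ideal.span_singleton_eq_bot] using hs
  have hrb : Ideal.span {r} ≠ (0 : Ideal R) := by
    simpa [Ideal.zero_eq_bot, Ideal.span_singleton_eq_bot] using hr
  refine assoc_le_of_count_le (by simpa using hsb) (by simpa using hrb) ?_
  intro p hp
  obtain ⟨J, rfl⟩ := Associates.mk_surjective p
  have hJirr : Irreducible J := Associates.irreducible_mk.mp hp
  have hJprime : Prime J := UniqueFactorizationMonoid.irreducible_iff_prime.mp hJirr
  haveI hJp : J.IsPrime := Ideal.isPrime_of_prime hJprime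
  set v : HeightOneSpectrum R := ⟨J, hJp, hJprime.ne_zero⟩ with hv
  have hvd := h v
  rw [show v.intValuation r = v.intValuationDef r from rfl,
    show v.intValuation s = v.intValuationDef s from rfl,
    intValuationDef_if_neg _ hr, intValuationDef_if_neg _ hs] at hvd
  rw [WithZero.exp_le_exp, neg_le_neg_iff, Nat.cast_le] at hvd
  exact hvd

lemma exists_algebraMap_eq_of_valuation_le_one (F : Type*) [Field F] [Algebra R F]
    [IsFractionRing R F] {z : F}
    (h : ∀ v : HeightOneSpectrum R, v.valuation F z ≤ 1) : ∃ x : R, algebraMap R F x = z := by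
  obtain ⟨r, s, hs, hz⟩ := IsFractionRing.div_surjective (A := R) z
  have hs0 : s ≠ 0 := nonZeroDivisors.ne_zero hs
  have hsF : algebraMap R F s ≠ 0 := fun h0 => hs0 (IsFractionRing.to_map_eq_zero_iff.mp h0)
  rcases eq_or_ne r 0 with rfl | hr
  · exact ⟨0, by rw [← hz]; simp⟩
  have hdvd : s ∣ r := by
    refine dvd_of_intValuation_le hr hs0 ?_
    intro v
    have hv := h v
    rw [← hz, map_div₀, valuation_of_algebraMap, valuation_of_algebraMap] at hv
    have hspos : (0 : ℤᵐ⁰) < v.intValuation s :=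
      lt_of_le_of_ne zero_le' (Ne.symm (intValuation_ne_zero v s hs0))
    rwa [div_le_one₀ hspos] at hv
  obtain ⟨c, rfl⟩ := hdvd
  refine ⟨c, ?_⟩
  rw [← hz, map_mul, mul_comm, mul_div_assoc, div_self hsF, mul_one]

end Misc

section SInt

variable {R : Type*} [CommRing R] [IsDomain R] [IsDedekindDomain R]

/-- A "local uniformizer-like" element: a generator of a principal power of `v.asIdeal`. -/
lemma exists_gen [Fintype (ClassGroup R)] (v : HeightOneSpectrum R) :
    ∃ π : R, π ≠ 0 ∧ v.intValuation π ≤ Multiplicative.ofAdd (-1 : ℤ) ∧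
      ∀ w : HeightOneSpectrum R, w ≠ v → w.intValuation π = 1 := by
  set k := Fintype.card (ClassGroup R) with hk
  have hk0 : k ≠ 0 := Fintype.card_ne_zero
  have hvnz : v.asIdeal ∈ (Ideal R)⁰ :=
    mem_nonZeroDivisors_of_ne_zero v.ne_bot
  have hprin : (v.asIdeal ^ k).IsPrincipal := by
    have h1 : ClassGroup.mk0 (⟨v.asIdeal, hvnz⟩ ^ k) = 1 := by
      rw [map_pow]
      exact pow_card_eq_one
    have hmem : v.asIdeal ^ k ∈ (Ideal R)⁰ := pow_mem hvnz k
    have : (⟨v.asIdeal, hvnz⟩ : (Ideal R)⁰) ^ k = ⟨v.asIdeal ^ k, hmem⟩ := by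
      ext; simp
    rw [this] at h1
    exact (ClassGroup.mk0_eq_one_iff hmem).mp h1
  obtain ⟨π, hπ⟩ := hprin
  have hπ' : v.asIdeal ^ k = Ideal.span {π} := by
    simpa [Ideal.submodule_span_eq] using hπ
  have hπ0 : π ≠ 0 := by
    rintro rfl
    have hne : v.asIdeal ≠ (0 : Ideal R) := by simpa [Ideal.zero_eq_bot] using v.ne_bot
    exact pow_ne_zero k hne
      (by rw [hπ']; simp [Ideal.zero_eq_bot, Ideal.span_singleton_eq_bot])
  refine ⟨π, hπ0, ?_, ?_⟩
  · have : v.asIdeal ^ 1 ∣ Ideal.span {π} := by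
      rw [← hπ']
      exact pow_dvd_pow _ (Nat.one_le_iff_ne_zero.mpr hk0)
    have h := (intValuation_le_pow_iff_dvd v π 1).mpr this
    simpa [WithZero.exp] using h
  · intro w hw
    refine le_antisymm (intValuation_le_one w π) ?_
    by_contra hlt
    push_neg at hlt
    have hdvd : w.asIdeal ∣ Ideal.span {π} := (intValuation_lt_one_iff_dvd w π).mp hlt
    rw [← hπ'] at hdvd
    have hwp : Prime w.asIdeal :=
      UniqueFactorizationMonoid.irreducible_iff_prime.mp w.irreducible
    have : w.asIdeal ∣ v.asIdeal := hwp.dvd_of_dvd_pow hdvd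
    have hle : v.asIdeal ≤ w.asIdeal := Ideal.le_of_dvd this
    have hmax : v.asIdeal.IsMaximal := Ring.DimensionLEOne.maximalOfPrime v.ne_bot v.isPrime
    exact hw (HeightOneSpectrum.ext (hmax.eq_of_le w.isPrime.ne_top hle).symm)

lemma exists_nat_val_eq {α : ℤᵐ⁰} (h0 : α ≠ 0) (h1 : α ≤ 1) :
    ∃ d : ℕ, α = Multiplicative.ofAdd (-(d : ℤ)) := by
  obtain ⟨x, rfl⟩ := WithZero.ne_zero_iff_exists.mp h0
  refine ⟨(-Multiplicative.toAdd x).toNat, ?_⟩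
  rw [← WithZero.coe_one, WithZero.coe_le_coe] at h1
  have hx : Multiplicative.toAdd x ≤ 0 := by
    simpa using Multiplicative.toAdd_le.mpr h1
  congr 1
  rw [Int.toNat_of_nonneg (by omega), neg_neg, ofAdd_toAdd]

end SInt

section SIntLoc

variable {R : Type*} [CommRing R] [IsDomain R] [IsDedekindDomain R]
  (F : Type*) [Field F] [Algebra R F] [IsFractionRing R F]

variable (R) in
/-- The submonoid of elements of `R` which become invertible in `O_S`. -/
def sIntegerMonoid (S : Set (HeightOneSpectrum R)) : Submonoid R where
  carrier := {x : R | x ≠ 0 ∧ ∀ v ∉ S, v.intValuation x = 1}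
  one_mem' := ⟨one_ne_zero, fun v _ => map_one v.intValuation⟩
  mul_mem' := fun {x y} hx hy => ⟨mul_ne_zero hx.1 hy.1, fun v hv => by
    rw [map_mul, hx.2 v hv, hy.2 v hv, one_mul]⟩

lemma sIntegerMonoid_le (S : Set (HeightOneSpectrum R)) : sIntegerMonoid R S ≤ R⁰ :=
  fun _ hx => mem_nonZeroDivisors_of_ne_zero hx.1

lemma ofAdd_neg_one_pow (n : ℕ) :
    (↑(Multiplicative.ofAdd (-1 : ℤ)) : ℤᵐ⁰) ^ n = (↑(Multiplicative.ofAdd (-(n:ℤ))) : ℤᵐ⁰) := by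
  rw [← WithZero.coe_pow, WithZero.coe_inj, ← ofAdd_nsmul]
  congr 1
  simp

theorem isLocalization_sInteger [Fintype (ClassGroup R)] (S : Set (HeightOneSpectrum R))
    (hS : S.Finite) : IsLocalization (sIntegerMonoid R S) (S.integer F) where
  map_units := by
    rintro ⟨y, hy0, hy⟩
    have hyF : algebraMap R F y ≠ 0 := fun h0 => hy0 (IsFractionRing.to_map_eq_zero_iff.mp h0)
    refine isUnit_iff_exists_inv.mpr ⟨⟨(algebraMap R F y)⁻¹, fun v hv => ?_⟩, ?_⟩
    · rw [map_inv₀, valuation_of_algebraMap, hy v hv, inv_one]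
    · apply Subtype.ext
      have : (algebraMap R (S.integer F) y : F) = algebraMap R F y := rfl
      simpa [this] using mul_inv_cancel₀ hyF
  surj := by
    rintro z
    obtain ⟨r, s, hs, hz⟩ := IsFractionRing.div_surjective (A := R) (z : F)
    have hs0 : s ≠ 0 := nonZeroDivisors.ne_zero hs
    have hsF : algebraMap R F s ≠ 0 := fun h0 => hs0 (IsFractionRing.to_map_eq_zero_iff.mp h0)
    choose π hπ0 hπle hπeq using fun v : HeightOneSpectrum R => exists_gen v
    choose d hd using fun v : HeightOneSpectrum R =>
      exists_nat_val_eq (intValuation_ne_zero v s hs0) (intValuation_le_one v s)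
    set m : R := ∏ v ∈ hS.toFinset, (π v) ^ (d v) with hm
    have hm0 : m ≠ 0 := Finset.prod_ne_zero_iff.mpr fun v _ => pow_ne_zero _ (hπ0 v)
    have hmout : ∀ w ∉ S, w.intValuation m = 1 := by
      intro w hw
      rw [hm, map_prod]
      refine Finset.prod_eq_one fun v hv => ?_
      rw [map_pow, hπeq v w (fun h => hw (h ▸ hS.mem_toFinset.mp hv)), one_pow]
    have hmle : ∀ v ∈ S, v.intValuation m ≤ v.intValuation s := by
      intro v hv
      rw [hm, map_prod, Finset.prod_eq_single_of_mem v (hS.mem_toFinset.mpr hv)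
        (fun w _ hwv => by rw [map_pow, hπeq w v (Ne.symm hwv), one_pow])]
      rw [map_pow, hd v]
      calc (v.intValuation (π v)) ^ (d v)
          ≤ (↑(Multiplicative.ofAdd (-1 : ℤ)) : ℤᵐ⁰) ^ (d v) := pow_le_pow_left' (hπle v) _
        _ = _ := ofAdd_neg_one_pow (d v)
    have hval : ∀ v : HeightOneSpectrum R, v.valuation F ((z : F) * algebraMap R F m) ≤ 1 := by
      intro v
      by_cases hv : v ∈ S
      · have hb0 : (v.intValuation s : ℤᵐ⁰) ≠ 0 := intValuation_ne_zero v s hs0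
        rw [map_mul, ← hz, map_div₀, valuation_of_algebraMap, valuation_of_algebraMap,
          valuation_of_algebraMap]
        have hbpos : (0 : ℤᵐ⁰) < v.intValuation s := lt_of_le_of_ne zero_le' (Ne.symm hb0)
        rw [div_mul_eq_mul_div, div_le_one₀ hbpos]
        calc v.intValuation r * v.intValuation m
            ≤ 1 * v.intValuation s := mul_le_mul' (intValuation_le_one v r) (hmle v hv)
          _ = v.intValuation s := one_mul _
      · rw [map_mul, valuation_of_algebraMap, hmout v hv, mul_one]
        exact z.property v hv
    obtain ⟨x, hx⟩ := exists_algebraMap_eq_of_valuation_le_one F hval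
    refine ⟨⟨x, ⟨m, hm0, hmout⟩⟩, ?_⟩
    apply Subtype.ext
    have h1 : (algebraMap R (S.integer F) m : F) = algebraMap R F m := rfl
    have h2 : (algebraMap R (S.integer F) x : F) = algebraMap R F x := rfl
    show (z : F) * (algebraMap R (S.integer F) m : F) = _
    rw [h1, h2, hx]
  exists_of_eq := by
    intro x y h
    refine ⟨1, ?_⟩
    have : algebraMap R F x = algebraMap R F y := congrArg Subtype.val h
    rw [IsFractionRing.injective R F this]

theorem sInteger_isDedekindDomain [Fintype (ClassGroup R)] (S : Set (HeightOneSpectrum R))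
    (hS : S.Finite) : IsDedekindDomain (S.integer F) :=
  haveI := isLocalization_sInteger F S hS
  IsLocalization.isDedekindDomain R (sIntegerMonoid_le S) (S.integer F)

end SIntLoc


section Moves


variable {R : Type*} [CommRing R] {n : ℕ}

lemma transvection_mulVec (i j : Fin n) (t : R) (v : Fin n → R) :
    (Matrix.transvection i j t).mulVec v = Function.update v i (v i + t * v j) := by
  ext k
  rw [Matrix.transvection, Matrix.add_mulVec, Matrix.one_mulVec]
  have hstd : (Matrix.single i j t).mulVec v k = if k = i then t * v j else 0 := by
    simp only [Matrix.mulVec, dotProduct, Matrix.single, Matrix.of_apply]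
    rw [Finset.sum_eq_single j]
    · by_cases hk : k = i
      · simp [hk]
      · simp [hk, Ne.symm hk]
    · intro l _ hl
      by_cases hk : i = k <;> simp [hk, hl, Ne.symm hl]
    · simp
  rw [Pi.add_apply, hstd]
  by_cases hk : k = i
  · subst hk; simp [Function.update]
  · simp [Function.update, hk]

variable (n) in
/-- `Reach a v w`: `w` is obtainable from `v` by elementary matrices congruent to 1 mod `(a)`. -/
def Reach (a : R) (v w : Fin n → R) : Prop :=
  ∃ g ∈ Subgroup.closure
      {g : Matrix.SpecialLinearGroup (Fin n) R |
        ∃ (i j : Fin n) (hij : i ≠ j) (t : _), t ∈ Ideal.span {a} ∧ g = elemMatrix i j hij t},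
    (g : Matrix (Fin n) (Fin n) R).mulVec v = w

lemma Reach.refl (a : R) (v : Fin n → R) : Reach n a v v :=
  ⟨1, Subgroup.one_mem _, by simp⟩

lemma Reach.step {a : R} {v w : Fin n → R} (i j : Fin n) (hij : i ≠ j) {t : R}
    (ht : t ∈ Ideal.span {a}) (h : Reach n a v w) :
    Reach n a v (Function.update w i (w i + t * w j)) := by
  obtain ⟨g, hg, hgv⟩ := h
  refine ⟨elemMatrix i j hij t * g,
    mul_mem (Subgroup.subset_closure ⟨i, j, hij, t, ht, rfl⟩) hg, ?_⟩
  rw [Matrix.SpecialLinearGroup.coe_mul, ← Matrix.mulVec_mulVec, hgv]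
  exact transvection_mulVec i j t w

lemma Reach.phase1 {a : R} {v w : Fin n → R} (N : Fin n) (t : Fin n → R)
    (ht : ∀ i, t i ∈ Ideal.span {a}) (h : Reach n a v w) (T : Finset (Fin n)) (hT : N ∉ T) :
    Reach n a v (fun i => if i ∈ T then w i + t i * w N else w i) := by
  classical
  induction T using Finset.induction_on with
  | empty => simpa using h
  | @insert j T hj ih =>
    have hNT : N ∉ T := fun hN => hT (Finset.mem_insert_of_mem hN)
    have hjN : j ≠ N := fun hN => hT (hN ▸ Finset.mem_insert_self j T)
    have hstep := Reach.step j N hjN (ht j) (ih hNT)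
    convert hstep using 1
    funext k
    by_cases hkj : k = j
    · subst hkj
      simp [Function.update, hj, hjN.symm, if_neg (fun h : (N:Fin n) ∈ T => hNT h)]
    · by_cases hkT : k ∈ T <;> simp [Function.update, hkj, hkT, Finset.mem_insert]

lemma Reach.phase2 {a : R} {v w : Fin n → R} (N : Fin n) (t : Fin n → R)
    (ht : ∀ i, t i ∈ Ideal.span {a}) (h : Reach n a v w) (T : Finset (Fin n)) (hT : N ∉ T) :
    Reach n a v (Function.update w N (w N + ∑ i ∈ T, t i * w i)) := by
  classical
  induction T using Finset.induction_on with
  | empty => simpa using h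
  | @insert j T hj ih =>
    have hNT : N ∉ T := fun hN => hT (Finset.mem_insert_of_mem hN)
    have hjN : j ≠ N := fun hN => hT (hN ▸ Finset.mem_insert_self j T)
    have hstep := Reach.step N j (Ne.symm hjN) (ht j) (ih hNT)
    convert hstep using 1
    have hwj : Function.update w N (w N + ∑ i ∈ T, t i * w i) j = w j := by
      simp [Function.update, hjN]
    have hwN : Function.update w N (w N + ∑ i ∈ T, t i * w i) N = w N + ∑ i ∈ T, t i * w i := by
      simp [Function.update]
    rw [Function.update_idem, hwj, hwN, Finset.sum_insert hj]
    ring_nf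

end Moves

section Choice

variable {R : Type*} [CommRing R] [IsDomain R] [IsDedekindDomain R]

lemma finite_maximal_mem {z : R} (hz : z ≠ 0) :
    {p : Ideal R | p.IsMaximal ∧ z ∈ p}.Finite := by
  have hspan : (Ideal.span {z} : Ideal R) ≠ 0 := by
    simpa [Ideal.zero_eq_bot, Ideal.span_singleton_eq_bot] using hz
  have h := Ideal.finite_factors hspan
  refine ((h.image (fun v => v.asIdeal))).subset ?_
  rintro p ⟨hpm, hpz⟩
  have hpbot : p ≠ ⊥ := fun hb => hz (by simpa [hb, Ideal.mem_bot] using hpz)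
  refine ⟨⟨p, hpm.isPrime, hpbot⟩, ?_, rfl⟩
  simp only [Set.mem_setOf_eq]
  rw [Ideal.dvd_iff_le]
  exact Ideal.span_le.mpr (by simpa using hpz)

/-- Choice of the elementary modifications making the first `n-1` coordinates,
divided by `a`, generate the unit ideal. -/
lemma exists_coords_span_top {n : ℕ} (N i₀ i₁ : Fin n)
    (h01 : i₀ ≠ i₁) (h0N : i₀ ≠ N) (h1N : i₁ ≠ N)
    (a : R) (y : Fin n → R) (hy : Ideal.span (Set.range y) = ⊤)
    (c : Fin n → R) (hc : ∀ i, i ≠ N → y i = a ^ 2 * c i)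
    (b : R) (hb : y N = 1 + a ^ 2 * b) :
    ∃ s : Fin n → R,
      Ideal.span (Set.range (fun i => if i = N then 0 else a * c i + s i * y N)) = ⊤ := by
  classical
  by_cases hyN : y N = 0
  · refine ⟨0, ?_⟩
    rw [eq_top_iff, ← hy, Ideal.span_le]
    rintro x ⟨k, rfl⟩
    by_cases hk : k = N
    · rw [hk, hyN]; exact zero_mem _
    · have hzk : (fun i => if i = N then (0:R) else a * c i + (0 : Fin n → R) i * y N) k
          = a * c k := by simp [hk]
      have hyk : y k = a * (a * c k) := by rw [hc k hk]; ring
      rw [hyk, ← hzk]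
      exact Ideal.mul_mem_left _ a (Ideal.subset_span ⟨k, rfl⟩)
  -- main case
  · set s₀ : R := if a * c i₀ = 0 then 1 else 0 with hs₀
    have hz₀ : a * c i₀ + s₀ * y N ≠ 0 := by
      by_cases h : a * c i₀ = 0
      · rw [hs₀]; simp [h, hyN]
      · rw [hs₀]; simpa [h] using h
    set z₀ : R := a * c i₀ + s₀ * y N with hz₀def
    -- the finite set of bad primes
    set P : Set (Ideal R) := {p | p.IsMaximal ∧ z₀ ∈ p ∧ y N ∉ p} with hP
    have hPfin : P.Finite :=
      (finite_maximal_mem hz₀).subset (fun p hp => ⟨hp.1, hp.2.1⟩)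
    haveI := hPfin.to_subtype
    -- for each bad prime, an inverse of y N
    have hinv : ∀ p : P, ∃ u ip : R, ip ∈ (p : Ideal R) ∧ u * y N + ip = 1 := by
      rintro ⟨p, hpm, _, hpyN⟩
      obtain ⟨u, ip, hip, hu⟩ := hpm.exists_inv hpyN
      exact ⟨u, ip, hip, hu⟩
    choose u ip hip hu using hinv
    -- CRT
    obtain ⟨s₁, hs₁⟩ := Ideal.exists_forall_sub_mem_ideal
      (I := fun p : P => (p : Ideal R))
      (fun p q hpq => Ideal.isCoprime_iff_sup_eq.mpr (Ideal.IsMaximal.coprime_of_ne p.2.1 q.2.1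
        (fun h => hpq (Subtype.coe_injective h))))
      (fun p => u p * (1 - a * c i₁))
    refine ⟨fun i => if i = i₀ then s₀ else if i = i₁ then s₁ else 0, ?_⟩
    set s : Fin n → R := fun i => if i = i₀ then s₀ else if i = i₁ then s₁ else 0 with hs
    set z : Fin n → R := fun i => if i = N then 0 else a * c i + s i * y N with hzdef
    by_contra hne
    obtain ⟨m, hmm, hm⟩ := Ideal.exists_le_maximal _ hne
    have hzm : ∀ i, z i ∈ m := fun i => hm (Ideal.subset_span ⟨i, rfl⟩)
    have hzi0 : z i₀ = z₀ := by
      show (if i₀ = N then 0 else a * c i₀ + s i₀ * y N) = z₀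
      rw [if_neg h0N, show s i₀ = s₀ from if_pos rfl]
    have hz₀m : z₀ ∈ m := hzi0 ▸ hzm i₀
    by_cases hyNm : y N ∈ m
    · -- a ∉ m, and then every coordinate of y is in m: contradiction
      have haN : a ∉ m := by
        intro ham
        have h1 : (1 : R) ∈ m := by
          have : y N - a * (a * b) ∈ m := Submodule.sub_mem m hyNm
            (Ideal.mul_mem_right _ _ ham)
          rwa [hb, show 1 + a ^ 2 * b - a * (a * b) = 1 by ring] at this
        exact hmm.ne_top ((Ideal.eq_top_iff_one m).mpr h1)
      have hym : ∀ i, y i ∈ m := by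
        intro i
        by_cases hi : i = N
        · rwa [hi]
        · have hzi : a * c i + s i * y N ∈ m := by
            have h' := hzm i
            rwa [show z i = a * c i + s i * y N from by
              show (if i = N then 0 else a * c i + s i * y N) = _
              rw [if_neg hi]] at h'
          have hac : a * c i ∈ m := by
            have : a * c i + s i * y N - s i * y N ∈ m :=
              Submodule.sub_mem m hzi (Ideal.mul_mem_left _ _ hyNm)
            simpa using this
          have hci : c i ∈ m := ((hmm.isPrime.mem_or_mem hac).resolve_left haN)
          rw [hc i hi, pow_two, mul_assoc]
          exact Ideal.mul_mem_left _ _ (Ideal.mul_mem_left _ _ hci)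
      have : (⊤ : Ideal R) ≤ m := by
        rw [← hy, Ideal.span_le]
        rintro x ⟨k, rfl⟩
        exact hym k
      exact hmm.ne_top (top_le_iff.mp this)
    · -- m is one of the bad primes; but z i₁ ≡ 1 mod m
      have hmP : m ∈ P := ⟨hmm, hz₀m, hyNm⟩
      set p : P := ⟨m, hmP⟩ with hp
      have hzi1 : z i₁ = a * c i₁ + s₁ * y N := by
        show (if i₁ = N then 0 else a * c i₁ + s i₁ * y N) = _
        rw [if_neg h1N,
          show s i₁ = s₁ from by
            show (if i₁ = i₀ then s₀ else if i₁ = i₁ then s₁ else 0) = s₁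
            rw [if_neg (Ne.symm h01), if_pos rfl]]
      have hz₁ : a * c i₁ + s₁ * y N ∈ m := hzi1 ▸ hzm i₁
      have hkey : a * c i₁ + s₁ * y N - 1 ∈ m := by
        have h1 : (s₁ - u p * (1 - a * c i₁)) * y N ∈ m :=
          Ideal.mul_mem_right _ _ (hs₁ p)
        have h2 : (1 - a * c i₁) * ip p ∈ m := Ideal.mul_mem_left _ _ (hip p)
        have h3 : (s₁ - u p * (1 - a * c i₁)) * y N - (1 - a * c i₁) * ip p ∈ m :=
          Submodule.sub_mem m h1 h2
        have heq : a * c i₁ + s₁ * y N - 1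
            = (s₁ - u p * (1 - a * c i₁)) * y N - (1 - a * c i₁) * ip p := by
          linear_combination (1 - a * c i₁) * hu p
        rw [heq]; exact h3
      have h1m : (1 : R) ∈ m := by
        have := Submodule.sub_mem m hz₁ hkey
        simpa using this
      exact hmm.ne_top ((Ideal.eq_top_iff_one m).mpr h1m)

end Choice

section KeyThm

variable {R : Type*} [CommRing R] [IsDomain R] [IsDedekindDomain R]

theorem key_mulVec {n : ℕ} (hn : 3 ≤ n) (a : R)
    (y : Fin n → R) (hy : Ideal.span (Set.range y) = ⊤)
    (hcong : ∀ i : Fin n, y i - lastStdVec n R i ∈ Ideal.span {a ^ 2}) :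
    Reach n a (lastStdVec n R) y := by
  classical
  set N : Fin n := ⟨n - 1, by omega⟩ with hN
  have hlast : ∀ i : Fin n, lastStdVec n R i = if i = N then 1 else 0 := by
    intro i
    show (if (i : ℕ) = n - 1 then (1 : R) else 0) = _
    by_cases h : i = N
    · subst h; rw [if_pos rfl, if_pos rfl]
    · rw [if_neg (fun hv => h (Fin.ext hv)), if_neg h]
  have hdvd : ∀ i : Fin n, a ^ 2 ∣ (if i = N then y N - 1 else y i) := by
    intro i
    by_cases h : i = N
    · subst h
      rw [if_pos rfl]
      have h' := hcong N
      rw [hlast N, if_pos rfl] at h'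
      exact Ideal.mem_span_singleton.mp h'
    · rw [if_neg h]
      have h' := hcong i
      rw [hlast i, if_neg h, sub_zero] at h'
      exact Ideal.mem_span_singleton.mp h'
  choose w hw using hdvd
  have hc : ∀ i, i ≠ N → y i = a ^ 2 * w i := fun i hi => by
    have h' := hw i; rwa [if_neg hi] at h'
  have hb : y N = 1 + a ^ 2 * w N := by
    have h' := hw N; rw [if_pos rfl] at h'; linear_combination h'
  set i₀ : Fin n := ⟨0, by omega⟩ with hi₀
  set i₁ : Fin n := ⟨1, by omega⟩ with hi₁
  have h01 : i₀ ≠ i₁ := by simp [Fin.ext_iff, hi₀, hi₁]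
  have h0N : i₀ ≠ N := by simp [Fin.ext_iff, hi₀, hN]; omega
  have h1N : i₁ ≠ N := by simp [Fin.ext_iff, hi₁, hN]; omega
  obtain ⟨s, hs⟩ := exists_coords_span_top N i₀ i₁ h01 h0N h1N a y hy w hc _ hb
  set z : Fin n → R := fun i => if i = N then 0 else a * w i + s i * y N with hz
  have hzN : z N = 0 := if_pos rfl
  have hbmem : w N ∈ Ideal.span (Set.range z) := by rw [hs]; trivial
  obtain ⟨cf, hcf⟩ := Ideal.mem_span_range_iff_exists_fun.mp hbmem
  set T : Finset (Fin n) := Finset.univ.erase N with hT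
  have hNT : N ∉ T := Finset.notMem_erase N _
  -- Phase A
  have step1 := Reach.phase1 N (fun i => a * z i)
    (fun i => Ideal.mem_span_singleton.mpr (dvd_mul_right a _))
    (Reach.refl a (lastStdVec n R)) T hNT
  set v2 : Fin n → R := fun i => if i = N then 1 else a * z i with hv2
  have hv2eq : (fun i => if i ∈ T then lastStdVec n R i + (fun i => a * z i) i * lastStdVec n R N
      else lastStdVec n R i) = v2 := by
    funext i
    by_cases hi : i = N
    · subst hi
      rw [if_neg hNT, hlast, if_pos rfl]
      exact (if_pos rfl).symm
    · have hiT : i ∈ T := Finset.mem_erase.mpr ⟨hi, Finset.mem_univ i⟩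
      rw [if_pos hiT, hlast i, if_neg hi, hlast N, if_pos rfl]
      show 0 + a * z i * 1 = if i = N then 1 else a * z i
      rw [if_neg hi]; ring
  rw [hv2eq] at step1
  -- Phase B
  have step2 := Reach.phase2 N (fun i => a * cf i)
    (fun i => Ideal.mem_span_singleton.mpr (dvd_mul_right a _)) step1 T hNT
  set v3 : Fin n → R := fun i => if i = N then y N else a * z i with hv3
  have hsum : v2 N + ∑ i ∈ T, (fun i => a * cf i) i * v2 i = y N := by
    have hterm : ∀ i ∈ T, (fun i => a * cf i) i * v2 i = a ^ 2 * (cf i * z i) := by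
      intro i hiT
      have hi := (Finset.mem_erase.mp hiT).1
      show (a * cf i) * (if i = N then 1 else a * z i) = _
      rw [if_neg hi]; ring
    rw [Finset.sum_congr rfl hterm, ← Finset.mul_sum]
    have hTsum : ∑ i ∈ T, cf i * z i = ∑ i, cf i * z i :=
      Finset.sum_erase _ (by rw [hzN, mul_zero])
    rw [hTsum, hcf]
    have hv2N : v2 N = 1 := if_pos rfl
    rw [hv2N, hb]
  have hupd : Function.update v2 N (v2 N + ∑ i ∈ T, (fun i => a * cf i) i * v2 i) = v3 := by
    funext i
    by_cases hi : i = N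
    · subst hi
      rw [Function.update_self, hsum]
      exact (if_pos rfl).symm
    · rw [Function.update_of_ne hi]
      show (if i = N then 1 else a * z i) = (if i = N then y N else a * z i)
      rw [if_neg hi, if_neg hi]
  rw [hupd] at step2
  -- Phase C
  have step3 := Reach.phase1 N (fun i => -(a * s i))
    (fun i => neg_mem (Ideal.mem_span_singleton.mpr (dvd_mul_right a _))) step2 T hNT
  have hfinal : (fun i => if i ∈ T then v3 i + (fun i => -(a * s i)) i * v3 N else v3 i) = y := by
    funext i
    by_cases hi : i = N
    · subst hi
      rw [if_neg hNT]
      exact if_pos rfl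
    · have hiT : i ∈ T := Finset.mem_erase.mpr ⟨hi, Finset.mem_univ i⟩
      rw [if_pos hiT]
      show (if i = N then y N else a * z i) + -(a * s i) * (if N = N then y N else a * z N) = y i
      rw [if_neg hi, if_pos rfl, hc i hi]
      show a * (if i = N then 0 else a * w i + s i * y N) + -(a * s i) * y N = a ^ 2 * w i
      rw [if_neg hi]; ring
  rw [hfinal] at step3
  exact step3

end KeyThm


/-- Over the ring `𝒪_S` of `S`-integers of a number field `K` and for `n ≥ 3`: for any nonzero
`a ∈ 𝒪_S` and any unimodular vector `y ∈ 𝒪_S^n` with `y ≡ (0, …, 0, 1) (mod a²𝒪_S)`, there is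
an element `g` of the subgroup of `SL_n(𝒪_S)` generated by the elementary matrices `e_ij(t)`
with `t ∈ a𝒪_S` such that `g • (0, …, 0, 1) = y`. -/
theorem exists_elementary_subgroup_element_mulVec_eq
    (K : Type*) [Field K] [NumberField K]
    (S : Finset (HeightOneSpectrum (𝓞 K)))
    (n : ℕ) (hn : 3 ≤ n)
    (a : (S : Set (HeightOneSpectrum (𝓞 K))).integer K) (ha : a ≠ 0)
    (y : Fin n → (S : Set (HeightOneSpectrum (𝓞 K))).integer K)
    (hy : Ideal.span (Set.range y) = ⊤)
    (hcong : ∀ i : Fin n,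
      y i - lastStdVec n ((S : Set (HeightOneSpectrum (𝓞 K))).integer K) i ∈
        Ideal.span {a ^ 2}) :
    ∃ g ∈ Subgroup.closure
        {g : Matrix.SpecialLinearGroup (Fin n) ((S : Set (HeightOneSpectrum (𝓞 K))).integer K) |
          ∃ (i j : Fin n) (hij : i ≠ j) (t : _), t ∈ Ideal.span {a} ∧ g = elemMatrix i j hij t},
      (g : Matrix (Fin n) (Fin n) ((S : Set (HeightOneSpectrum (𝓞 K))).integer K)).mulVec
        (lastStdVec n _) = y := by
  haveI : IsDedekindDomain ((S : Set (HeightOneSpectrum (𝓞 K))).integer K) :=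
    sInteger_isDedekindDomain K (S : Set (HeightOneSpectrum (𝓞 K))) S.finite_toSet
  exact key_mulVec hn a y hy hcong
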